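/- The region D1 = {(i1, i2) ∈ ℝ² : i1 ≥ 0, i2 ≥ 0, i1 + i2 ≤ 1} is positively invariant for the planar system: every differentiable x : ℝ → ℝ² satisfying x'(t) = F(x(t)) for all t ≥ 0 with x(0) ∈ D1 satisfies x(t) ∈ D1 for all t ≥ 0. -/

import Mathlib

open Filter Topology Matrix

set_option maxHeartbeats 1000000

/-- Right-hand side of the planar system on `ℝ × ℝ` (coordinates `(i1, i2)`). -/
noncomputable def planarF (b b2 ε l1 l2 γ1 γ2 p q : ℝ) (x : ℝ × ℝ) : ℝ × ℝ :=
  ((p*l1 - b - ε - γ1)*x.1 + p*l2*x.2 + (x.1 + x.2)*((b2 + ε - p*l1)*x.1 - p*l2*x.2),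
   q*l1*x.1 + (q*l2 - b - ε - γ2)*x.2 + (x.1 + x.2)*((b2 + ε - q*l2)*x.2 - q*l1*x.1))

/-- One-sided slope estimate for a component of a max function. -/
lemma slope_aux {g : ℝ → ℝ} {dg M y r t : ℝ} (hg : HasDerivAt g dg t)
    (hle : g t ≤ M) (hy : g t < M ∨ dg ≤ y) (hyr : y < r) (hr : 0 < r) :
    ∀ᶠ z in 𝓝[>] t, g z - M < r * (z - t) := by
  rcases hy with h | h
  · have h1 : ∀ᶠ z in 𝓝 t, g z < M := Filter.Tendsto.eventually_lt_const h hg.continuousAt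
    filter_upwards [h1.filter_mono nhdsWithin_le_nhds, self_mem_nhdsWithin] with z h1z h2z
    have : (0:ℝ) < r * (z - t) := mul_pos hr (sub_pos.2 h2z)
    linarith
  · have hs := hasDerivAt_iff_tendsto_slope.mp hg
    have h1 : ∀ᶠ z in 𝓝[≠] t, slope g t z < r :=
      Filter.Tendsto.eventually_lt_const (lt_of_le_of_lt h hyr) hs
    have hmono : 𝓝[>] t ≤ 𝓝[≠] t := nhdsWithin_mono t fun z hz => ne_of_gt hz
    filter_upwards [h1.filter_mono hmono, self_mem_nhdsWithin] with z h1z h2z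
    have hzt : 0 < z - t := sub_pos.2 h2z
    rw [slope_def_field] at h1z
    have := (div_lt_iff₀ hzt).mp h1z
    linarith

lemma bound_aux {i2 s m : ℝ} (hm : 0 ≤ m) (h2 : -i2 ≤ m) (h3 : s - 1 ≤ m)
    (hi2 : |i2| ≤ 3) (hs : |s| ≤ 6) : -i2 * (1 - s) ≤ 7 * m := by
  obtain ⟨hi2a, hi2b⟩ := abs_le.1 hi2
  obtain ⟨hsa, hsb⟩ := abs_le.1 hs
  rcases le_or_gt s 1 with h | h
  · rcases le_or_gt (-i2) 0 with h' | h'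
    · nlinarith
    · nlinarith
  · rcases le_or_gt i2 0 with h' | h'
    · nlinarith
    · nlinarith

/-- Bound on the derivative of a negated coordinate when it is the active (maximal) piece. -/
lemma deriv_bound_1 {c0 c1 c2 i1 i2 m K : ℝ} (hc2 : 0 ≤ c2)
    (hm : -i1 = m) (h2 : -i2 ≤ m) (h3 : i1 + i2 - 1 ≤ m) (hm0 : 0 ≤ m)
    (hi1 : |i1| ≤ 3) (hi2 : |i2| ≤ 3)
    (hK : |c0| + 6*|c1| + 7*c2 ≤ K) :
    -(c0*i1 + c2*i2 + (i1+i2)*(c1*i1 - c2*i2)) ≤ K * m := by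
  obtain ⟨hi1a, hi1b⟩ := abs_le.1 hi1
  obtain ⟨hi2a, hi2b⟩ := abs_le.1 hi2
  have hs : |i1 + i2| ≤ 6 := by rw [abs_le]; constructor <;> linarith
  have e : -(c0*i1 + c2*i2 + (i1+i2)*(c1*i1 - c2*i2))
      = (c0 + (i1+i2)*c1)*(-i1) + c2 * (-i2 * (1 - (i1+i2))) := by ring
  have hA : c0 + (i1+i2)*c1 ≤ |c0| + 6*|c1| := by
    have h1 : c0 ≤ |c0| := le_abs_self _
    have h2' : (i1+i2)*c1 ≤ |i1+i2| * |c1| := by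
      calc (i1+i2)*c1 ≤ |(i1+i2)*c1| := le_abs_self _
        _ = |i1+i2| * |c1| := abs_mul _ _
    nlinarith [abs_nonneg c1]
  have hAm : (c0 + (i1+i2)*c1)*(-i1) ≤ (|c0| + 6*|c1|) * m := by
    rw [hm]; exact mul_le_mul_of_nonneg_right hA hm0
  have hB : -i2 * (1 - (i1+i2)) ≤ 7 * m := bound_aux hm0 h2 h3 hi2 hs
  have hBm : c2 * (-i2 * (1 - (i1+i2))) ≤ c2 * (7 * m) := mul_le_mul_of_nonneg_left hB hc2
  have hKm : (|c0| + 6*|c1| + 7*c2) * m ≤ K * m := mul_le_mul_of_nonneg_right hK hm0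
  nlinarith

/-- Bound on the derivative of `i1 + i2 - 1` when it is the active piece. -/
lemma deriv_bound_3 {b b1 b2 ε l1 l2 γ1 γ2 p q i1 i2 m K : ℝ}
    (hb1 : 0 < b1) (hε : 0 < ε) (hl1 : 0 < l1) (hl2 : 0 < l2)
    (hγ1 : 0 < γ1) (hγ2 : 0 < γ2)
    (hb : b1 ≤ b) (hb2 : b2 = b - b1) (hpq : p + q = 1)
    (hm : i1 + i2 - 1 = m) (h1 : -i1 ≤ m) (h2 : -i2 ≤ m) (hm0 : 0 ≤ m)
    (hi1 : |i1| ≤ 3) (hi2 : |i2| ≤ 3)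
    (hK : γ1 + γ2 + 7*(l1+l2) + 7*(b2+ε) ≤ K) :
    ((p*l1 - b - ε - γ1)*i1 + p*l2*i2 + (i1+i2)*((b2 + ε - p*l1)*i1 - p*l2*i2))
      + (q*l1*i1 + (q*l2 - b - ε - γ2)*i2 + (i1+i2)*((b2 + ε - q*l2)*i2 - q*l1*i1))
      ≤ K * m := by
  obtain ⟨hi1a, hi1b⟩ := abs_le.1 hi1
  obtain ⟨hi2a, hi2b⟩ := abs_le.1 hi2
  have hb2' : 0 ≤ b2 := by rw [hb2]; linarith
  have hq' : q = 1 - p := by linarith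
  have hbb : b = b1 + b2 := by rw [hb2]; ring
  subst hq'
  have e : ((p*l1 - b - ε - γ1)*i1 + p*l2*i2 + (i1+i2)*((b2 + ε - p*l1)*i1 - p*l2*i2))
      + ((1-p)*l1*i1 + ((1-p)*l2 - b - ε - γ2)*i2 + (i1+i2)*((b2 + ε - (1-p)*l2)*i2 - (1-p)*l1*i1))
      = -γ1*i1 - γ2*i2 + (l1*i1 + l2*i2)*(1 - (i1+i2))
        + (i1+i2)*((b2+ε)*(i1+i2-1) - b1) := by
    rw [hbb]; ring
  rw [e]
  have hm5 : m ≤ 5 := by linarith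
  have hs1 : (1:ℝ) ≤ i1 + i2 := by linarith
  have t1 : -γ1*i1 ≤ γ1 * m := by nlinarith
  have t2 : -γ2*i2 ≤ γ2 * m := by nlinarith
  have t3 : (l1*i1 + l2*i2)*(1 - (i1+i2)) ≤ 7*(l1+l2) * m := by
    have h1s : 1 - (i1+i2) = -m := by linarith
    rw [h1s]
    nlinarith [mul_nonneg (mul_nonneg hl1.le hm0) (by linarith : (0:ℝ) ≤ m + i1),
      mul_nonneg (mul_nonneg hl2.le hm0) (by linarith : (0:ℝ) ≤ m + i2),
      mul_nonneg (mul_nonneg hl1.le hm0) (by linarith : (0:ℝ) ≤ 7 - m),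
      mul_nonneg (mul_nonneg hl2.le hm0) (by linarith : (0:ℝ) ≤ 7 - m)]
  have t4 : (i1+i2)*((b2+ε)*(i1+i2-1) - b1) ≤ 7*(b2+ε) * m := by
    rw [hm]
    nlinarith [mul_nonneg (add_nonneg hb2' hε.le) (mul_nonneg hm0 (by linarith : (0:ℝ) ≤ 7 - (i1+i2))),
      mul_nonneg hb1.le (by linarith : (0:ℝ) ≤ i1 + i2)]
  have hKm : (γ1 + γ2 + 7*(l1+l2) + 7*(b2+ε)) * m ≤ K * m := mul_le_mul_of_nonneg_right hK hm0
  nlinarith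

theorem stmt4 (b b1 b2 d ε l1 l2 γ1 γ2 p q : ℝ)
    (hb1 : 0 < b1) (hd : 0 < d) (hε : 0 < ε) (hl1 : 0 < l1) (hl2 : 0 < l2)
    (hγ1 : 0 < γ1) (hγ2 : 0 < γ2) (hp : 0 < p) (hq : 0 < q)
    (hb : b1 ≤ b) (hb2 : b2 = b - b1) (hpq : p + q = 1) :
    ∀ x : ℝ → ℝ × ℝ,
      (∀ t : ℝ, 0 ≤ t → HasDerivAt x (planarF b b2 ε l1 l2 γ1 γ2 p q (x t)) t) →
      (0 ≤ (x 0).1 ∧ 0 ≤ (x 0).2 ∧ (x 0).1 + (x 0).2 ≤ 1) →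
      ∀ t : ℝ, 0 ≤ t → 0 ≤ (x t).1 ∧ 0 ≤ (x t).2 ∧ (x t).1 + (x t).2 ≤ 1 := by
  intro x hx hx0
  have hb2' : 0 ≤ b2 := by rw [hb2]; linarith
  -- the "violation" function
  set f : ℝ → ℝ := fun t => max (max (max 0 (-(x t).1)) (-(x t).2)) ((x t).1 + (x t).2 - 1)
    with hf_def
  have hf_nonneg : ∀ t, 0 ≤ f t := fun t =>
    le_trans (le_max_left _ _) (le_trans (le_max_left _ _) (le_max_left _ _))
  have hf_mem : ∀ t, f t ≤ 0 → 0 ≤ (x t).1 ∧ 0 ≤ (x t).2 ∧ (x t).1 + (x t).2 ≤ 1 := by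
    intro t ht
    simp only [hf_def, max_le_iff] at ht
    exact ⟨by linarith [ht.1.1.2], by linarith [ht.1.2], by linarith [ht.2]⟩
  -- the Gronwall constant
  set K : ℝ := γ1 + γ2 + 7*(l1+l2) + 7*(b2+ε)
      + (|p*l1 - b - ε - γ1| + 6*|b2 + ε - p*l1| + 7*(p*l2))
      + (|q*l2 - b - ε - γ2| + 6*|b2 + ε - q*l2| + 7*(q*l1)) with hK_def
  have hK0 : 0 ≤ K := by
    have := abs_nonneg (p*l1 - b - ε - γ1)
    have := abs_nonneg (b2 + ε - p*l1)
    have := abs_nonneg (q*l2 - b - ε - γ2)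
    have := abs_nonneg (b2 + ε - q*l2)
    have : 0 ≤ p*l2 := by positivity
    have : 0 ≤ q*l1 := by positivity
    nlinarith [abs_nonneg (p*l1 - b - ε - γ1), abs_nonneg (b2 + ε - p*l1),
      abs_nonneg (q*l2 - b - ε - γ2), abs_nonneg (b2 + ε - q*l2),
      mul_pos hp hl2, mul_pos hq hl1, mul_pos hl1 hl2]
  -- Gronwall step: as long as the trajectory stays in the ball of radius 3, f stays ≤ 0
  have key : ∀ B : ℝ, (∀ s ∈ Set.Ico (0:ℝ) B, ‖x s‖ < 3) →
      ∀ t ∈ Set.Icc (0:ℝ) B, f t ≤ 0 := by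
    intro B hbnd
    have hcont : ContinuousOn f (Set.Icc 0 B) := by
      have hxc : ContinuousOn x (Set.Icc 0 B) := fun t ht =>
        ((hx t ht.1).continuousAt).continuousWithinAt
      have h1 : ContinuousOn (fun t => (x t).1) (Set.Icc 0 B) :=
        continuous_fst.comp_continuousOn hxc
      have h2 : ContinuousOn (fun t => (x t).2) (Set.Icc 0 B) :=
        continuous_snd.comp_continuousOn hxc
      have houter : Continuous (fun v : ℝ × ℝ => max (max (max 0 (-v.1)) (-v.2)) (v.1 + v.2 - 1)) := by
        exact ((continuous_const.max continuous_fst.neg).max continuous_snd.neg).max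
          ((continuous_fst.add continuous_snd).sub continuous_const)
      exact houter.comp_continuousOn hxc
    have h0 : f 0 ≤ 0 := by
      simp only [hf_def]
      refine max_le (max_le (max_le le_rfl ?_) ?_) ?_ <;> [linarith [hx0.1]; linarith [hx0.2.1];
        linarith [hx0.2.2]]
    have hslope : ∀ t ∈ Set.Ico (0:ℝ) B, ∀ r, K * f t < r →
        ∃ᶠ z in 𝓝[>] t, (z - t)⁻¹ * (f z - f t) < r := by
      intro t ht r hr
      have ht0 : 0 ≤ t := ht.1
      have hd := hx t ht0
      have hd1 : HasDerivAt (fun s => (x s).1) (planarF b b2 ε l1 l2 γ1 γ2 p q (x t)).1 t := by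
        simpa using (hd.hasFDerivAt.fst).hasDerivAt
      have hd2 : HasDerivAt (fun s => (x s).2) (planarF b b2 ε l1 l2 γ1 γ2 p q (x t)).2 t := by
        simpa using (hd.hasFDerivAt.snd).hasDerivAt
      have hm0 : 0 ≤ f t := hf_nonneg t
      have hr0 : 0 < r := lt_of_le_of_lt (by positivity) hr
      -- bounds on the current point
      have hnorm := hbnd t ht
      have hi1 : |(x t).1| ≤ 3 := by
        have : ‖(x t).1‖ ≤ ‖x t‖ := norm_fst_le (x t)
        rw [Real.norm_eq_abs] at this; linarith
      have hi2 : |(x t).2| ≤ 3 := by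
        have : ‖(x t).2‖ ≤ ‖x t‖ := norm_snd_le (x t)
        rw [Real.norm_eq_abs] at this; linarith
      have hle1 : -(x t).1 ≤ f t :=
        le_trans (le_max_right _ _) (le_trans (le_max_left _ _) (le_max_left _ _))
      have hle2 : -(x t).2 ≤ f t := le_trans (le_max_right _ _) (le_max_left _ _)
      have hle3 : (x t).1 + (x t).2 - 1 ≤ f t := le_max_right _ _
      -- piece 0
      have E0 : ∀ᶠ z in 𝓝[>] t, (0:ℝ) - f t < r * (z - t) :=
        slope_aux (g := fun _ => (0:ℝ)) (hasDerivAt_const t 0) hm0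
          (Or.inr (by positivity)) hr hr0
      -- piece 1
      have hy1 : -(x t).1 < f t ∨ -(planarF b b2 ε l1 l2 γ1 γ2 p q (x t)).1 ≤ K * f t := by
        rcases eq_or_lt_of_le hle1 with heq | hlt
        · right
          have hbd := deriv_bound_1 (c0 := p*l1 - b - ε - γ1) (c1 := b2 + ε - p*l1)
            (c2 := p*l2) (i1 := (x t).1) (i2 := (x t).2) (m := f t) (K := K)
            (by positivity) heq hle2 hle3 hm0 hi1 hi2
            (by
              nlinarith [abs_nonneg (q*l2 - b - ε - γ2), abs_nonneg (b2 + ε - q*l2),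
                mul_pos hq hl1, mul_pos hl1 hl2, add_pos hl1 hl2,
                add_pos (lt_of_lt_of_le hb1 hb) hε, hb2'])
          simp only [planarF]
          linarith
        · exact Or.inl hlt
      have E1 := slope_aux hd1.neg hle1 hy1 hr hr0
      -- piece 2
      have hy2 : -(x t).2 < f t ∨ -(planarF b b2 ε l1 l2 γ1 γ2 p q (x t)).2 ≤ K * f t := by
        rcases eq_or_lt_of_le hle2 with heq | hlt
        · right
          have hbd := deriv_bound_1 (c0 := q*l2 - b - ε - γ2) (c1 := b2 + ε - q*l2)
            (c2 := q*l1) (i1 := (x t).2) (i2 := (x t).1) (m := f t) (K := K)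
            (by positivity) heq hle1 (by linarith) hm0 hi2 hi1
            (by
              nlinarith [abs_nonneg (p*l1 - b - ε - γ1), abs_nonneg (b2 + ε - p*l1),
                mul_pos hp hl2, mul_pos hl1 hl2, add_pos hl1 hl2,
                add_pos (lt_of_lt_of_le hb1 hb) hε, hb2'])
          simp only [planarF]
          linarith
        · exact Or.inl hlt
      have E2 := slope_aux hd2.neg hle2 hy2 hr hr0
      -- piece 3
      have hy3 : (x t).1 + (x t).2 - 1 < f t ∨
          (planarF b b2 ε l1 l2 γ1 γ2 p q (x t)).1
            + (planarF b b2 ε l1 l2 γ1 γ2 p q (x t)).2 ≤ K * f t := by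
        rcases eq_or_lt_of_le hle3 with heq | hlt
        · right
          have hbd := deriv_bound_3 (b := b) (b1 := b1) (b2 := b2) (ε := ε) (l1 := l1)
            (l2 := l2) (γ1 := γ1) (γ2 := γ2) (p := p) (q := q)
            (i1 := (x t).1) (i2 := (x t).2) (m := f t) (K := K)
            hb1 hε hl1 hl2 hγ1 hγ2 hb hb2 hpq heq hle1 hle2 hm0 hi1 hi2
            (by
              nlinarith [abs_nonneg (p*l1 - b - ε - γ1), abs_nonneg (b2 + ε - p*l1),
                abs_nonneg (q*l2 - b - ε - γ2), abs_nonneg (b2 + ε - q*l2),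
                mul_pos hp hl2, mul_pos hq hl1])
          simp only [planarF] at hbd ⊢
          linarith
        · exact Or.inl hlt
      have E3 := slope_aux ((hd1.add hd2).sub_const 1) hle3 hy3 hr hr0
      apply Filter.Eventually.frequently
      filter_upwards [E0, E1, E2, E3, self_mem_nhdsWithin] with z e0 e1 e2 e3 hz
      have hzt : 0 < z - t := sub_pos.2 hz
      have hfz : f z - f t < r * (z - t) := by
        have : f z < f t + r * (z - t) := by
          simp only [Pi.neg_apply, Pi.add_apply] at e1 e2 e3
          simp only [hf_def]
          refine max_lt (max_lt (max_lt ?_ ?_) ?_) ?_ <;> [linarith; linarith; linarith; linarith]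
        linarith
      have := (div_lt_iff₀ hzt).mpr (by linarith : f z - f t < r * (z - t))
      rw [div_eq_inv_mul] at this
      exact this
    have := le_gronwallBound_of_liminf_deriv_right_le (f := f) (f' := fun t => K * f t)
      (δ := 0) (K := K) (ε := 0) (a := 0) (b := B) hcont hslope h0
      (fun t _ => by simp)
    intro t ht
    have h := this t ht
    rwa [gronwallBound_ε0_δ0] at h
  -- localization: the trajectory can never reach norm 3
  intro t1 ht1
  by_cases hS : ∃ t ∈ Set.Icc (0:ℝ) t1, 3 ≤ ‖x t‖
  · exfalso
    set S : Set ℝ := {t ∈ Set.Icc (0:ℝ) t1 | 3 ≤ ‖x t‖} with hS_def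
    have hxc : ContinuousOn x (Set.Icc 0 t1) := fun t ht =>
      ((hx t ht.1).continuousAt).continuousWithinAt
    have hSclosed : IsClosed S := by
      have : S = Set.Icc (0:ℝ) t1 ∩ (fun t => ‖x t‖) ⁻¹' Set.Ici 3 := by
        ext t; simp [hS_def, Set.mem_setOf_eq, And.comm]
      rw [this]
      exact (hxc.norm).preimage_isClosed_of_isClosed isClosed_Icc isClosed_Ici
    have hSsub : S ⊆ Set.Icc 0 t1 := fun t ht => ht.1
    have hScomp : IsCompact S := (isCompact_Icc).of_isClosed_subset hSclosed hSsub
    obtain ⟨t0, ht0S⟩ := hS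
    have hSne : S.Nonempty := ⟨t0, ⟨ht0S.1, ht0S.2⟩⟩
    have hmem := hScomp.sInf_mem hSne
    set t2 := sInf S with ht2_def
    have ht2 : t2 ∈ Set.Icc (0:ℝ) t1 := hSsub hmem
    have hbelow : ∀ s ∈ Set.Ico (0:ℝ) t2, ‖x s‖ < 3 := by
      intro s hs
      by_contra hcon
      push_neg at hcon
      have hsS : s ∈ S := ⟨⟨hs.1, le_trans hs.2.le ht2.2⟩, hcon⟩
      have : t2 ≤ s := csInf_le (hScomp.bddBelow) hsS
      linarith [hs.2]
    have hft2 : f t2 ≤ 0 := key t2 hbelow t2 ⟨ht2.1, le_refl t2⟩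
    obtain ⟨h1, h2, h3⟩ := hf_mem t2 hft2
    have : ‖x t2‖ ≤ 1 := by
      rw [Prod.norm_def]
      refine max_le ?_ ?_ <;> rw [Real.norm_eq_abs, abs_le] <;> constructor <;> linarith
    have := hmem.2
    linarith
  · push_neg at hS
    have hbelow : ∀ s ∈ Set.Ico (0:ℝ) t1, ‖x s‖ < 3 := fun s hs =>
      hS s ⟨hs.1, hs.2.le⟩
    exact hf_mem t1 (key t1 hbelow t1 ⟨ht1, le_refl t1⟩)
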